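/- Let (Ω,σ,ℝ⁺) be a continuous global semiflow on a compact metric space such that every point admits at least one backward extension. Define Ω* = {ξ ∈ C(ℝ,Ω) | σ(t, ξ(s)) = ξ(t+s) for all t ≥ 0 and s ∈ ℝ} with the compact-open topology. Then Ω* is a compact metric space, and the map σ* : ℝ × Ω* → Ω*, (t,ξ) ↦ ξ·t where (ξ·t)(s) = ξ(t+s), defines a continuous flow on Ω*. -/

import Mathlib

open Filter Topology

/-- Let `(Ω,σ,ℝ⁺)` be a continuous global semiflow on a compact metric
space such that every point admits at least one backward extension. Then
`Ω* = {ξ ∈ C(ℝ,Ω) | σ(t,ξ(s)) = ξ(t+s) for t ≥ 0, s ∈ ℝ}` is compact (in the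
compact-open topology, which is metrizable), and the time-shift map
`σ*(t,ξ) = ξ·t`, `(ξ·t)(s) = ξ(t+s)`, defines a continuous flow on `Ω*`. -/
theorem stmt3 (Ω : Type*) [MetricSpace Ω] [CompactSpace Ω]
    (σ : ℝ → Ω → Ω)
    (hcont : ContinuousOn (fun p : ℝ × Ω => σ p.1 p.2) (Set.Ici (0:ℝ) ×ˢ Set.univ))
    (hid : ∀ ω, σ 0 ω = ω)
    (hsemi : ∀ t s : ℝ, 0 ≤ t → 0 ≤ s → ∀ ω, σ (t + s) ω = σ t (σ s ω))
    (hback : ∀ ω : Ω, ∃ θ : ℝ → Ω, ContinuousOn θ (Set.Iic (0:ℝ)) ∧ θ 0 = ω ∧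
      ∀ t s : ℝ, 0 ≤ t → s ≤ -t → σ t (θ s) = θ (t + s))
    (Ωstar : Set C(ℝ, Ω))
    (hΩstar : Ωstar = {ξ | ∀ t : ℝ, 0 ≤ t → ∀ s : ℝ, σ t (ξ s) = ξ (t + s)})
    -- the time-shift (lifting) flow
    (shift : ℝ → C(ℝ, Ω) → C(ℝ, Ω))
    (hshift : ∀ t ξ s, shift t ξ s = ξ (t + s)) :
    IsCompact Ωstar ∧
    (∀ t : ℝ, ∀ ξ ∈ Ωstar, shift t ξ ∈ Ωstar) ∧
    Continuous (fun p : ℝ × C(ℝ, Ω) => shift p.1 p.2) ∧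
    (∀ ξ, shift 0 ξ = ξ) ∧
    (∀ t s : ℝ, ∀ ξ, shift (t + s) ξ = shift t (shift s ξ)) := by
  -- continuity of each time-t map
  have hσt : ∀ t : ℝ, 0 ≤ t → Continuous (σ t) := by
    intro t ht
    have := hcont.comp_continuous
      (f := fun ω : Ω => ((t, ω) : ℝ × Ω))
      (continuous_const.prodMk continuous_id)
      (fun ω => Set.mem_prod.mpr ⟨ht, trivial⟩)
    exact this
  -- The set of (not necessarily continuous) functions satisfying the flow identity
  set A : Set (ℝ → Ω) := {f | ∀ t : ℝ, 0 ≤ t → ∀ s : ℝ, σ t (f s) = f (t + s)} with hA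
  have hAclosed : IsClosed A := by
    have : A = ⋂ (t : ℝ) (_ : 0 ≤ t) (s : ℝ), {f : ℝ → Ω | σ t (f s) = f (t + s)} := by
      ext f; simp [hA]
    rw [this]
    refine isClosed_iInter fun t => isClosed_iInter fun ht => isClosed_iInter fun s => ?_
    exact isClosed_eq ((hσt t ht).comp (continuous_apply s)) (continuous_apply (t + s))
  -- every element of A is automatically continuous
  have hAcont : ∀ f ∈ A, Continuous f := by
    intro f hf
    rw [continuous_iff_continuousAt]
    intro u
    have hg : ContinuousAt (fun u' : ℝ => σ (u' - (u - 1)) (f (u - 1))) u := by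
      have h1 : ContinuousAt (fun p : ℝ × Ω => σ p.1 p.2) ((u - (u - 1) : ℝ), f (u - 1)) := by
        refine hcont.continuousAt ?_
        have hmemo : Set.Ioi (0:ℝ) ×ˢ (Set.univ : Set Ω) ∈
            𝓝 ((u - (u - 1) : ℝ), f (u - 1)) := by
          refine (isOpen_Ioi.prod isOpen_univ).mem_nhds ?_
          exact Set.mem_prod.mpr ⟨Set.mem_Ioi.mpr (show (0:ℝ) < u - (u - 1) by linarith), trivial⟩
        exact Filter.mem_of_superset hmemo
          (Set.prod_mono Set.Ioi_subset_Ici_self (le_refl _))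
      have h2 : ContinuousAt (fun u' : ℝ => ((u' - (u - 1) : ℝ), f (u - 1))) u := by
        fun_prop
      have h3 : ContinuousAt ((fun p : ℝ × Ω => σ p.1 p.2) ∘
          (fun u' : ℝ => ((u' - (u - 1) : ℝ), f (u - 1)))) u := ContinuousAt.comp (x := u) h1 h2
      exact h3
    refine hg.congr ?_
    have hmem : Set.Ioi (u - 1) ∈ 𝓝 u := isOpen_Ioi.mem_nhds (Set.mem_Ioi.mpr (by linarith))
    filter_upwards [hmem] with u' hu'
    have h0 : (0:ℝ) ≤ u' - (u - 1) := by
      have := Set.mem_Ioi.mp hu'; linarith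
    have heq := hf (u' - (u - 1)) h0 (u - 1)
    rw [heq]; congr 1; ring
  -- the image of Ωstar in the function space is exactly A
  have himg : ContinuousMap.toFun '' Ωstar = A := by
    ext f
    constructor
    · rintro ⟨ξ, hξ, rfl⟩
      rw [hΩstar] at hξ
      exact hξ
    · intro hf
      exact ⟨⟨f, hAcont f hf⟩, by rw [hΩstar]; exact hf, rfl⟩
  -- pointwise compactness
  have hS1 : IsCompact (ContinuousMap.toFun '' Ωstar) := by
    rw [himg]; exact hAclosed.isCompact
  -- equicontinuity
  have hS2 : Equicontinuous ((↑) : Ωstar → ℝ → Ω) := by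
    intro x
    rw [Metric.equicontinuousAt_iff]
    intro ε hε
    have hKc : IsCompact (Set.Icc (0:ℝ) 2 ×ˢ (Set.univ : Set Ω)) :=
      isCompact_Icc.prod isCompact_univ
    have hu : UniformContinuousOn (fun p : ℝ × Ω => σ p.1 p.2)
        (Set.Icc (0:ℝ) 2 ×ˢ (Set.univ : Set Ω)) :=
      hKc.uniformContinuousOn_of_continuous
        (hcont.mono (Set.prod_mono Set.Icc_subset_Ici_self (le_refl _)))
    rw [Metric.uniformContinuousOn_iff] at hu
    obtain ⟨δ, hδ, hδ'⟩ := hu ε hε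
    refine ⟨min δ 1, lt_min hδ one_pos, fun y hy ξ => ?_⟩
    obtain ⟨ξ, hξ⟩ := ξ
    rw [hΩstar] at hξ
    have hyx : |y - x| < min δ 1 := by rwa [Real.dist_eq] at hy
    have h1 : |y - x| < δ := lt_of_lt_of_le hyx (min_le_left _ _)
    have h2 : |y - x| < 1 := lt_of_lt_of_le hyx (min_le_right _ _)
    rw [abs_lt] at h2
    obtain ⟨h2a, h2b⟩ := h2
    have hx' : ξ x = σ 1 (ξ (x - 1)) := by
      rw [hξ 1 one_pos.le (x - 1)]; ring_nf
    have hy' : ξ y = σ (y - x + 1) (ξ (x - 1)) := by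
      rw [hξ (y - x + 1) (by linarith) (x - 1)]; ring_nf
    have hP : ((1:ℝ), ξ (x - 1)) ∈ Set.Icc (0:ℝ) 2 ×ˢ (Set.univ : Set Ω) :=
      Set.mem_prod.mpr ⟨Set.mem_Icc.mpr ⟨by norm_num, by norm_num⟩, trivial⟩
    have hQ : ((y - x + 1 : ℝ), ξ (x - 1)) ∈ Set.Icc (0:ℝ) 2 ×ˢ (Set.univ : Set Ω) :=
      Set.mem_prod.mpr ⟨Set.mem_Icc.mpr ⟨show (0:ℝ) ≤ y - x + 1 by linarith, show (y - x + 1 : ℝ) ≤ 2 by linarith⟩, trivial⟩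
    have hd1 : dist (1:ℝ) (y - x + 1) = |y - x| := by
      rw [Real.dist_eq, abs_sub_comm]
      congr 1; ring
    have hdist : dist ((1:ℝ), ξ (x - 1)) ((y - x + 1 : ℝ), ξ (x - 1)) < δ := by
      rw [Prod.dist_eq]
      simp only [dist_self]
      rw [hd1]
      exact max_lt h1 hδ
    have := hδ' _ hP _ hQ hdist
    rw [hx', hy']
    exact this
  have hcompact : IsCompact Ωstar := ArzelaAscoli.isCompact_of_equicontinuous Ωstar hS1 hS2
  refine ⟨hcompact, ?_, ?_, ?_, ?_⟩
  · -- invariance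
    intro t ξ hξ
    rw [hΩstar] at hξ ⊢
    intro u hu s
    rw [hshift, hshift, hξ u hu (t + s)]
    ring_nf
  · -- joint continuity
    have key : (fun p : ℝ × C(ℝ, Ω) => shift p.1 p.2) =
        fun p : ℝ × C(ℝ, Ω) =>
          p.2.comp ⟨fun s => p.1 + s, continuous_const.add continuous_id⟩ := by
      funext p; ext s; simp [hshift]
    rw [key]
    apply ContinuousMap.continuous_of_continuous_uncurry
    have huncurry : (Function.uncurry fun (p : ℝ × C(ℝ, Ω)) (s : ℝ) =>
        (p.2.comp ⟨fun s => p.1 + s, continuous_const.add continuous_id⟩) s) =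
        (fun q : C(ℝ, Ω) × ℝ => q.1 q.2) ∘
          (fun q : (ℝ × C(ℝ, Ω)) × ℝ => (q.1.2, q.1.1 + q.2)) := by
      funext q; rfl
    rw [huncurry]
    exact continuous_eval.comp
      ((continuous_snd.comp continuous_fst).prodMk
        ((continuous_fst.comp continuous_fst).add continuous_snd))
  · -- identity
    intro ξ; ext s; rw [hshift]; norm_num
  · -- group law
    intro t s ξ; ext u; rw [hshift, hshift, hshift]; ring_nf
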